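/- Let A be an M×N partial sign matrix and let d ≥ 1. If the sign-rank of A is at most d, then there exists a linear map g : ℝ^N → ℝ^d (i.e., g : (Fin N → ℝ) →ₗ[ℝ] (Fin d → ℝ)) such that 0 ∉ g(|S(A)|), i.e., g(x) ≠ 0 for every x in the crosspolytope realization |S(A)|. (This is the inequality ind_lin(S(A)) ≤ srank(A) − 1 from the paper's Main Lemma 1.) -/

import Mathlib

open scoped RealInnerProductSpace Pointwise

/-- The realized simplex of row `i` of the partial sign matrix `A`:
the convex hull of `{e_j : A i j = 1} ∪ {-e_j : A i j = -1}`. -/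
noncomputable def rowSimplex {M N : ℕ} (A : Fin M → Fin N → ℤ) (i : Fin M) :
    Set (Fin N → ℝ) :=
  convexHull ℝ
    ({x | ∃ j, A i j = 1 ∧ x = Pi.single j (1 : ℝ)} ∪
     {x | ∃ j, A i j = -1 ∧ x = -Pi.single j (1 : ℝ)})

/-- The crosspolytope realization `|S(A)|` of the sign complex of `A`. -/
noncomputable def signComplexReal {M N : ℕ} (A : Fin M → Fin N → ℤ) :
    Set (Fin N → ℝ) :=
  ⋃ i, (rowSimplex A i ∪ -(rowSimplex A i))

/-- If the sign-rank of a partial sign matrix `A` is at most `d`, then there is a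
linear map `g : ℝ^N → ℝ^d` avoiding the origin on `|S(A)|`, i.e.
`ind_lin(S(A)) ≤ srank(A) - 1`. -/
theorem linear_index_le_srank {M N : ℕ} (d : ℕ) (hd : 1 ≤ d)
    (A : Fin M → Fin N → ℤ)
    (hA : ∀ i j, A i j = -1 ∨ A i j = 0 ∨ A i j = 1)
    (hrank : ∃ (u : Fin M → EuclideanSpace ℝ (Fin d))
        (v : Fin N → EuclideanSpace ℝ (Fin d)),
      ∀ i j, A i j ≠ 0 → 0 < (A i j : ℝ) * ⟪u i, v j⟫) :
    ∃ g : (Fin N → ℝ) →ₗ[ℝ] (Fin d → ℝ),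
      ∀ x ∈ signComplexReal A, g x ≠ 0 := by
  obtain ⟨u, v, huv⟩ := hrank
  set c : Fin M → Fin N → ℝ := fun i j => ⟪u i, v j⟫ with hc
  refine ⟨∑ j : Fin N,
      (LinearMap.proj j : (Fin N → ℝ) →ₗ[ℝ] ℝ).smulRight
        (WithLp.equiv 2 (Fin d → ℝ) (v j)), ?_⟩
  have hlin : ∀ i : Fin M, IsLinearMap ℝ (fun x : Fin N → ℝ => ∑ j, x j * c i j) := by
    intro i
    constructor
    · intro a b
      simp [add_mul, Finset.sum_add_distrib]
    · intro r a
      simp [Finset.mul_sum, mul_assoc]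
  have hkey : ∀ i : Fin M, ∀ y ∈ rowSimplex A i, 0 < ∑ j, y j * c i j := by
    intro i y hy
    refine convexHull_min ?_ (convex_halfSpace_gt (hlin i) 0) hy
    have hcd : ∀ i j, c i j = ⟪u i, v j⟫ := fun _ _ => rfl
    rintro z (⟨j, hj, rfl⟩ | ⟨j, hj, rfl⟩)
    · have h := huv i j (by rw [hj]; decide)
      rw [hj] at h
      push_cast at h
      have hsum : ∑ j', (Pi.single j (1 : ℝ) : Fin N → ℝ) j' * c i j' = c i j := by
        simp [Pi.single_apply]
      show (0:ℝ) < ∑ j', (Pi.single j (1 : ℝ) : Fin N → ℝ) j' * c i j'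
      rw [hsum, hcd]
      linarith
    · have h := huv i j (by rw [hj]; decide)
      rw [hj] at h
      push_cast at h
      have hsum : ∑ j', (-(Pi.single j (1 : ℝ) : Fin N → ℝ)) j' * c i j' = -c i j := by
        simp [Pi.single_apply]
      show (0:ℝ) < ∑ j', (-(Pi.single j (1 : ℝ) : Fin N → ℝ)) j' * c i j'
      rw [hsum, hcd]
      linarith
  intro x hx hzero
  -- from g x = 0, derive ∑ j, x j * c i j = 0 for every i
  have hzer : ∀ i : Fin M, ∑ j, x j * c i j = 0 := by
    intro i
    have hcomp : ∀ k : Fin d, ∑ j, x j * v j k = 0 := by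
      intro k
      have := congrFun hzero k
      simpa [LinearMap.sum_apply, Finset.sum_apply] using this
    have hcij : ∀ j, c i j = ∑ k, u i k * v j k := by
      intro j
      simp [hc, PiLp.inner_apply, RCLike.inner_apply]
      exact Finset.sum_congr rfl fun _ _ => mul_comm _ _
    calc ∑ j, x j * c i j = ∑ j, ∑ k, x j * (u i k * v j k) := by
          simp [hcij, Finset.mul_sum]
      _ = ∑ k, ∑ j, u i k * (x j * v j k) := by
          rw [Finset.sum_comm]; congr 1; ext k; congr 1; ext j; ring
      _ = ∑ k, u i k * ∑ j, x j * v j k := by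
          simp [Finset.mul_sum]
      _ = 0 := by simp [hcomp]
  simp only [signComplexReal, Set.mem_iUnion, Set.mem_union] at hx
  obtain ⟨i, hx | hx⟩ := hx
  · exact absurd (hzer i) (ne_of_gt (hkey i x hx))
  · have hx' : -x ∈ rowSimplex A i := Set.mem_neg.mp hx
    have := hkey i (-x) hx'
    have : 0 < -∑ j, x j * c i j := by
      simpa [neg_mul, Finset.sum_neg_distrib] using this
    linarith [hzer i]
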